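/- Let Γ be a group. The Birget–Rhodes prefix expansion Γ^Pr is an inverse monoid: for every element s = (A, g), the element s* = (g⁻¹A, g⁻¹) satisfies s s* s = s and s* s s* = s*, and s* is the unique element with these two properties. -/

import Mathlib

/-- The Birget–Rhodes product `(A, g)(B, h) = (A ∪ gB, gh)` on pairs of a
finite subset of `Γ` and an element of `Γ`. -/
def brMul {Γ : Type*} [Group Γ] [DecidableEq Γ] (p q : Finset Γ × Γ) :
    Finset Γ × Γ :=
  (p.1 ∪ q.1.image (fun b => p.2 * b), p.2 * q.2)

/-- Membership in the Birget–Rhodes prefix expansion `Γ^Pr`: the pair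
`(A, g)` satisfies `1 ∈ A` and `g ∈ A`. -/
def brValid {Γ : Type*} [Group Γ] (p : Finset Γ × Γ) : Prop :=
  (1 : Γ) ∈ p.1 ∧ p.2 ∈ p.1

/-- `Γ^Pr` is an inverse monoid: for `s = (A, g)`, the element
`s* = (g⁻¹A, g⁻¹)` satisfies `s s* s = s` and `s* s s* = s*`, and it is the
unique element of `Γ^Pr` with these two properties. -/
theorem stmt9 {Γ : Type*} [Group Γ] [DecidableEq Γ]
    (A : Finset Γ) (g : Γ) (h1 : (1 : Γ) ∈ A) (hg : g ∈ A) :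
    brValid (A.image (fun a => g⁻¹ * a), g⁻¹) ∧
    brMul (brMul (A, g) (A.image (fun a => g⁻¹ * a), g⁻¹)) (A, g) = (A, g) ∧
    brMul (brMul (A.image (fun a => g⁻¹ * a), g⁻¹) (A, g))
        (A.image (fun a => g⁻¹ * a), g⁻¹) = (A.image (fun a => g⁻¹ * a), g⁻¹) ∧
    (∀ q : Finset Γ × Γ, brValid q →
      brMul (brMul (A, g) q) (A, g) = (A, g) →
      brMul (brMul q (A, g)) q = q →
      q = (A.image (fun a => g⁻¹ * a), g⁻¹)) := by
  refine ⟨⟨Finset.mem_image.mpr ⟨g, hg, by simp⟩, Finset.mem_image.mpr ⟨1, h1, by simp⟩⟩, ?_, ?_, ?_⟩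
  · simp only [brMul, Finset.image_image, Prod.mk.injEq]
    constructor
    · ext x
      simp only [Finset.mem_union, Finset.mem_image, Function.comp]
      constructor
      · rintro ((h | ⟨a, ha, rfl⟩) | ⟨a, ha, rfl⟩) <;> simpa
      · intro h; exact Or.inl (Or.inl h)
    · group
  · simp only [brMul, Finset.image_image, Prod.mk.injEq]
    constructor
    · ext x
      simp only [Finset.mem_union, Finset.mem_image, Function.comp]
      constructor
      · rintro ((h | h) | ⟨a, ha, rfl⟩)
        · exact h
        · exact h
        · exact ⟨a, ha, by group⟩
      · exact fun hx => Or.inl (Or.inl hx)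
    · group
  · rintro ⟨B, h⟩ ⟨hB1, hBh⟩ e1 e2
    simp only [brMul, Finset.image_image, Prod.mk.injEq] at e1 e2
    obtain ⟨e1s, e1g⟩ := e1
    obtain ⟨e2s, e2g⟩ := e2
    have hh : h = g⁻¹ := by
      have : g * h * g = g := e1g
      simp at this
      simpa using congrArg (fun x => g⁻¹ * x) this
    subst hh
    suffices hB : B = A.image (fun a => g⁻¹ * a) by rw [hB]
    apply Finset.Subset.antisymm
    · -- B ⊆ g⁻¹A : from e1s, gB ⊆ A
      intro x hx
      have : g * x ∈ A := by
        rw [← e1s]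
        exact Finset.mem_union_left _ (Finset.mem_union_right _ (Finset.mem_image.mpr ⟨x, hx, rfl⟩))
      exact Finset.mem_image.mpr ⟨g * x, this, by group⟩
    · -- g⁻¹A ⊆ B : from e2s
      intro x hx
      obtain ⟨a, ha, rfl⟩ := Finset.mem_image.mp hx
      rw [← e2s]
      exact Finset.mem_union_left _ (Finset.mem_union_right _ (Finset.mem_image.mpr ⟨a, ha, rfl⟩))
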